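/- Under the prefix-sampling scheme where a random walk ω^{(i)} out of node v_i satisfies Pr(ω is a prefix subwalk of ω^{(i)}) = p(ω) for every finite walk ω starting at v_i, the projection vector ψ(ω^{(i)})_q := ∑_{ω ∈ Ω_{iq}} (ω̃(ω) f_{len(ω)} / p(ω)) 𝟙(ω prefix subwalk of ω^{(i)}) satisfies 𝔼[ψ(ω^{(i)})_q] = ∑_{k=0}^∞ f_k (W^k)_{iq}, assuming absolute summability of the series ∑_{ω ∈ Ω_{iq}} |ω̃(ω) f_{len(ω)}|. -/

import Mathlib

open MeasureTheory

/-- Unbiasedness of the GRF projection vector: if each finite walk `ω ∈ Ω_{iq}` is a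
prefix of the sampled random walk with probability `p(ω) > 0`, then the expectation of
`ψ(ω^{(i)})_q = ∑_{ω} (ω̃(ω) f_{len ω} / p(ω)) 𝟙(ω prefix)` equals
`∑_k f k (W^k)_{iq}`, where `(W^k)_{iq} = ∑_{len ω = k} ω̃(ω)`. -/
theorem stmt_13 {X : Type*} [MeasurableSpace X] (μ : Measure X) [IsProbabilityMeasure μ]
    (Walk : Type*) [Countable Walk]
    (len : Walk → ℕ) (wt : Walk → ℝ) (pwalk : Walk → ℝ) (hpos : ∀ ω, 0 < pwalk ω)
    (Pref : Walk → Set X) (hmeas : ∀ ω, MeasurableSet (Pref ω))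
    (hprob : ∀ ω, μ (Pref ω) = ENNReal.ofReal (pwalk ω))
    (f : ℕ → ℝ)
    (habs : Summable fun ω : Walk => |wt ω * f (len ω)|)
    (hWk : ∀ k : ℕ, Summable fun ω : {ω : Walk // len ω = k} => wt ω.1) :
    ∫ x, (∑' ω : Walk, (wt ω * f (len ω) / pwalk ω) * (Pref ω).indicator (fun _ => (1 : ℝ)) x) ∂μ =
      ∑' k : ℕ, f k * ∑' ω : {ω : Walk // len ω = k}, wt ω.1 := by
  set F : Walk → X → ℝ := fun ω x =>
    (wt ω * f (len ω) / pwalk ω) * (Pref ω).indicator (fun _ => (1 : ℝ)) x with hF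
  have hfin : ∀ ω, μ (Pref ω) ≠ ⊤ := fun ω => (measure_lt_top μ _).ne
  have hint : ∀ ω, Integrable (F ω) μ := by
    intro ω
    exact ((integrable_const (1:ℝ)).indicator (hmeas ω)).const_mul _
  have hIF : ∀ ω, ∫ x, F ω x ∂μ = wt ω * f (len ω) := by
    intro ω
    rw [hF]
    simp only [integral_const_mul]
    rw [integral_indicator_const (1:ℝ) (hmeas ω), measureReal_def, hprob ω, smul_eq_mul, mul_one,
      ENNReal.toReal_ofReal (hpos ω).le, div_mul_cancel₀ _ (hpos ω).ne']
  have hnorm : ∀ ω, (∫ x, ‖F ω x‖ ∂μ) = |wt ω * f (len ω)| := by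
    intro ω
    have : (fun x => ‖F ω x‖) =
        fun x => |wt ω * f (len ω) / pwalk ω| * (Pref ω).indicator (fun _ => (1 : ℝ)) x := by
      funext x
      by_cases hx : x ∈ Pref ω
      · simp only [hF, Set.indicator_of_mem hx, mul_one, Real.norm_eq_abs]
      · simp only [hF, Set.indicator_of_notMem hx, mul_zero, norm_zero]
    rw [this]
    simp only [integral_const_mul]
    rw [integral_indicator_const (1:ℝ) (hmeas ω), measureReal_def, hprob ω, smul_eq_mul, mul_one,
      ENNReal.toReal_ofReal (hpos ω).le, abs_div, abs_of_pos (hpos ω),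
      div_mul_cancel₀ _ (hpos ω).ne']
  have hsum : Summable fun ω => ∫ x, ‖F ω x‖ ∂μ := by
    simpa only [hnorm] using habs
  rw [← integral_tsum_of_summable_integral_norm hint hsum]
  simp only [hIF]
  -- regroup by length
  have habs' : Summable fun ω : Walk => wt ω * f (len ω) := habs.of_abs
  let e : (Σ k : ℕ, {ω : Walk // len ω = k}) ≃ Walk := Equiv.sigmaFiberEquiv len
  have hsig : Summable fun σ : Σ k : ℕ, {ω : Walk // len ω = k} =>
      wt (e σ) * f (len (e σ)) := habs'.comp_injective e.injective
  calc ∑' ω : Walk, wt ω * f (len ω)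
      = ∑' σ : Σ k : ℕ, {ω : Walk // len ω = k}, wt (e σ) * f (len (e σ)) :=
        (e.tsum_eq _).symm
    _ = ∑' (k : ℕ) (ω : {ω : Walk // len ω = k}), wt ω.1 * f (len ω.1) := by
        rw [hsig.tsum_sigma]; exact tsum_congr fun k => tsum_congr fun c => rfl
    _ = ∑' k : ℕ, f k * ∑' ω : {ω : Walk // len ω = k}, wt ω.1 := by
        refine tsum_congr fun k => ?_
        have h : ∀ ω : {ω : Walk // len ω = k}, wt ω.1 * f (len ω.1) = f k * wt ω.1 :=
          fun ω => by rw [ω.2, mul_comm]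
        rw [tsum_congr h, tsum_mul_left]
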